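/- Let A be a positive operator on a Hilbert space H with m ≤ A ≤ M, 0 < m < M, and let 0 < s < p < 1, 0 < q < 1 with M^{p-1}·q ≤ (M^p - m^p)/(M - m) ≤ m^{p-1}·q. Then for every unit vector x, ⟨A^p x, x⟩ ≤ 2^{1-s}·max{m^{p-q}, M^{p-q}}·⟨Ax, x⟩^q. -/

import Mathlib

theorem kantorovich_power {H : Type*} [NormedAddCommGroup H]
    [InnerProductSpace ℂ H] [CompleteSpace H]
    (A : H →L[ℂ] H) (hA : A.IsPositive) (m M s p q : ℝ) (hm : 0 < m) (hmM : m < M)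
    (hs : 0 < s) (hsp : s < p) (hp1 : p < 1) (hq0 : 0 < q) (hq1 : q < 1)
    (hAm : ∀ x : H, m * ‖x‖ ^ 2 ≤ (inner ℂ (A x) x : ℂ).re)
    (hAM : ∀ x : H, (inner ℂ (A x) x : ℂ).re ≤ M * ‖x‖ ^ 2)
    (h1 : M ^ (p - 1) * q ≤ (M ^ p - m ^ p) / (M - m))
    (h2 : (M ^ p - m ^ p) / (M - m) ≤ m ^ (p - 1) * q)
    (x : H) (hx : ‖x‖ = 1) :
    (inner ℂ ((cfc (fun t : ℝ => t ^ p) A) x) x : ℂ).re ≤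
      2 ^ (1 - s) * max (m ^ (p - q)) (M ^ (p - q)) * (inner ℂ (A x) x : ℂ).re ^ q := by
  have hp0 : 0 < p := hs.trans hsp
  have hsa : IsSelfAdjoint A := hA.isSelfAdjoint
  set a : ℝ := (inner ℂ (A x) x : ℂ).re with ha_def
  have ham : m ≤ a := by simpa [hx] using hAm x
  have haM : a ≤ M := by simpa [hx] using hAM x
  have ha0 : 0 < a := hm.trans_le ham
  set c₁ : ℝ := p * a ^ (p - 1) with hc1
  set c₀ : ℝ := a ^ p - c₁ * a with hc0
  have hap : a ^ (p - 1) * a = a ^ p := by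
    rw [← Real.rpow_add_one ha0.ne' (p - 1)]; ring_nf
  have hcont : ContinuousOn (fun t : ℝ => t ^ p) (spectrum ℝ A) := fun t _ =>
    (Real.continuousAt_rpow_const t p (Or.inr hp0.le)).continuousWithinAt
  have key : ∀ t ∈ spectrum ℝ A, (fun t : ℝ => t ^ p) t ≤ c₀ + c₁ * t := by
    intro t ht
    have ht0 : 0 ≤ t :=
      spectrum_nonneg_of_nonneg ((A.nonneg_iff_isPositive).mpr hA) ht
    have hu : -1 ≤ t / a - 1 := by
      have : 0 ≤ t / a := div_nonneg ht0 ha0.le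
      linarith
    have hb := rpow_one_add_le_one_add_mul_self hu hp0.le hp1.le
    rw [show (1 : ℝ) + (t / a - 1) = t / a by ring] at hb
    have htp : t ^ p = a ^ p * (t / a) ^ p := by
      rw [← Real.mul_rpow ha0.le (div_nonneg ht0 ha0.le), mul_div_cancel₀ _ ha0.ne']
    have hmul : a ^ p * (t / a) ^ p ≤ a ^ p * (1 + p * (t / a - 1)) :=
      mul_le_mul_of_nonneg_left hb (Real.rpow_nonneg ha0.le p)
    have hexp : a ^ p * (1 + p * (t / a - 1)) = c₀ + c₁ * t := by
      rw [hc0, hc1, ← hap]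
      field_simp
      ring
    calc (fun t : ℝ => t ^ p) t = a ^ p * (t / a) ^ p := htp
      _ ≤ a ^ p * (1 + p * (t / a - 1)) := hmul
      _ = c₀ + c₁ * t := hexp
  have hcfc : cfc (fun t : ℝ => t ^ p) A ≤ cfc (fun t : ℝ => c₀ + c₁ * t) A :=
    cfc_mono key hcont (by fun_prop)
  have heq : cfc (fun t : ℝ => c₀ + c₁ * t) A = c₀ • (1 : H →L[ℂ] H) + c₁ • A := by
    rw [cfc_add A (fun _ => c₀) (fun t => c₁ * t), cfc_const c₀ A, cfc_const_mul_id c₁ A,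
      Algebra.algebraMap_eq_smul_one]
  rw [heq] at hcfc
  rw [ContinuousLinearMap.le_def] at hcfc
  have hinner := hcfc.inner_nonneg_left x
  rw [ContinuousLinearMap.sub_apply, inner_sub_left] at hinner
  replace hinner : 0 ≤ RCLike.re (inner ℂ ((c₀ • (1 : H →L[ℂ] H) + c₁ • A) x) x -
      inner ℂ ((cfc (fun t : ℝ => t ^ p) A) x) x) := by exact (Complex.le_def.mp hinner).1
  rw [map_sub] at hinner
  have hlin : (inner ℂ ((c₀ • (1 : H →L[ℂ] H) + c₁ • A) x) x : ℂ).re = c₀ + c₁ * a := by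
    have hxx : (inner ℂ x x : ℂ) = (1 : ℂ) := by
      rw [inner_self_eq_norm_sq_to_K, hx]; norm_num
    simp only [ContinuousLinearMap.add_apply, ContinuousLinearMap.smul_apply,
      ContinuousLinearMap.one_apply, inner_add_left, map_add]
    rw [RCLike.real_smul_eq_coe_smul (K := ℂ) c₀, RCLike.real_smul_eq_coe_smul (K := ℂ) c₁,
      inner_smul_left, inner_smul_left, hxx]
    simp [Complex.conj_ofReal, Complex.add_re, Complex.mul_re, ha_def]
  have hkey : (inner ℂ ((cfc (fun t : ℝ => t ^ p) A) x) x : ℂ).re ≤ a ^ p := by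
    have : (inner ℂ ((cfc (fun t : ℝ => t ^ p) A) x) x : ℂ).re ≤
        (inner ℂ ((c₀ • (1 : H →L[ℂ] H) + c₁ • A) x) x : ℂ).re := by
      simp only [RCLike.re_to_complex] at hinner
      linarith
    rw [hlin] at this
    have : (inner ℂ ((cfc (fun t : ℝ => t ^ p) A) x) x : ℂ).re ≤ c₀ + c₁ * a := this
    rw [hc0] at this
    linarith
  refine hkey.trans ?_
  have haq : 0 < a ^ q := Real.rpow_pos_of_pos ha0 q
  have hsplit : a ^ p = a ^ (p - q) * a ^ q := by
    rw [← Real.rpow_add ha0]; ring_nf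
  have hmax : a ^ (p - q) ≤ max (m ^ (p - q)) (M ^ (p - q)) := by
    rcases le_or_gt q p with h | h
    · exact le_trans (Real.rpow_le_rpow ha0.le haM (by linarith)) (le_max_right _ _)
    · exact le_trans (Real.rpow_le_rpow_of_nonpos hm ham (by linarith)) (le_max_left _ _)
  have h2s : (1 : ℝ) ≤ 2 ^ (1 - s) :=
    Real.one_le_rpow (by norm_num) (by linarith)
  have hmaxpos : 0 < max (m ^ (p - q)) (M ^ (p - q)) :=
    lt_max_of_lt_left (Real.rpow_pos_of_pos hm _)
  calc a ^ p = a ^ (p - q) * a ^ q := hsplit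
    _ ≤ max (m ^ (p - q)) (M ^ (p - q)) * a ^ q :=
        mul_le_mul_of_nonneg_right hmax haq.le
    _ ≤ 2 ^ (1 - s) * max (m ^ (p - q)) (M ^ (p - q)) * a ^ q :=
        mul_le_mul_of_nonneg_right (le_mul_of_one_le_left hmaxpos.le h2s) haq.le
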